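/- Let |0_L⟩ = (|0000⟩ + |1111⟩)/√2 and |1_L⟩ = (|1001⟩ + |0110⟩)/√2 in (ℂ²)^{⊗4}. For every qubit position i ∈ {1,2,3,4} and every single-qubit Pauli operator P ∈ {X, Y, Z} acting on qubit i (and as the identity on the other qubits), one has ⟨0_L| P |1_L⟩ = 0 and ⟨0_L| P |0_L⟩ = ⟨1_L| P |1_L⟩. These are the error-correction conditions guaranteeing that the four-qubit code can correct the erasure of any single qubit. -/
import Mathlib


open Matrix

/-- The index type of `(ℂ²)^{⊗4}`. -/
abbrev Q4 : Type := Fin 2 × Fin 2 × Fin 2 × Fin 2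

/-- The bits of a basis index of `(ℂ²)^{⊗4}`. -/
def bits (x : Q4) : Fin 4 → Fin 2 := ![x.1, x.2.1, x.2.2.1, x.2.2.2]

/-- The computational basis vector `|a₁a₂a₃a₄⟩` of `(ℂ²)^{⊗4}`. -/
def ket4 (a b c d : Fin 2) : Q4 → ℂ := fun x => if x = (a, b, c, d) then 1 else 0

/-- The Pauli matrix `X`. -/
def pauliX : Matrix (Fin 2) (Fin 2) ℂ := !![0, 1; 1, 0]

/-- The Pauli matrix `Y`. -/
def pauliY : Matrix (Fin 2) (Fin 2) ℂ := !![0, -Complex.I; Complex.I, 0]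

/-- The Pauli matrix `Z`. -/
def pauliZ : Matrix (Fin 2) (Fin 2) ℂ := !![1, 0; 0, -1]

/-- A single-qubit operator `P` acting on qubit `i` of `(ℂ²)^{⊗4}`
(and as the identity on the other qubits). -/
def pauliOn (P : Matrix (Fin 2) (Fin 2) ℂ) (i : Fin 4) : Matrix Q4 Q4 ℂ :=
  fun r c => ∏ k : Fin 4,
    if k = i then P (bits r k) (bits c k) else (if bits r k = bits c k then 1 else 0)

/-- The standard Hermitian inner product on `(ℂ²)^{⊗4}`. -/
noncomputable def innerC (u v : Q4 → ℂ) : ℂ := ∑ x : Q4, (starRingEnd ℂ) (u x) * v x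

/-- The logical codeword `|0_L⟩ = (|0000⟩ + |1111⟩)/√2`. -/
noncomputable def zeroL : Q4 → ℂ :=
  ((Real.sqrt 2 : ℂ))⁻¹ • (ket4 0 0 0 0 + ket4 1 1 1 1)

/-- The logical codeword `|1_L⟩ = (|1001⟩ + |0110⟩)/√2`. -/
noncomputable def oneL : Q4 → ℂ :=
  ((Real.sqrt 2 : ℂ))⁻¹ • (ket4 1 0 0 1 + ket4 0 1 1 0)

lemma innerC_zeroL (v : Q4 → ℂ) :
    innerC zeroL v = ((Real.sqrt 2 : ℂ))⁻¹ * (v (0,0,0,0) + v (1,1,1,1)) := by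
  simp [innerC, zeroL, ket4, Fintype.sum_prod_type, Fin.sum_univ_two, map_inv₀,
    Complex.conj_ofReal, Prod.ext_iff, mul_add, add_mul]
  try ring

lemma innerC_oneL (v : Q4 → ℂ) :
    innerC oneL v = ((Real.sqrt 2 : ℂ))⁻¹ * (v (1,0,0,1) + v (0,1,1,0)) := by
  simp [innerC, oneL, ket4, Fintype.sum_prod_type, Fin.sum_univ_two, map_inv₀,
    Complex.conj_ofReal, Prod.ext_iff, mul_add, add_mul]
  try ring

lemma mulVec_zeroL (M : Matrix Q4 Q4 ℂ) (x : Q4) :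
    (M *ᵥ zeroL) x = ((Real.sqrt 2 : ℂ))⁻¹ * (M x (0,0,0,0) + M x (1,1,1,1)) := by
  simp [Matrix.mulVec, dotProduct, zeroL, ket4, Fintype.sum_prod_type,
    Fin.sum_univ_two, Prod.ext_iff, mul_add]
  ring

lemma mulVec_oneL (M : Matrix Q4 Q4 ℂ) (x : Q4) :
    (M *ᵥ oneL) x = ((Real.sqrt 2 : ℂ))⁻¹ * (M x (1,0,0,1) + M x (0,1,1,0)) := by
  simp [Matrix.mulVec, dotProduct, oneL, ket4, Fintype.sum_prod_type,
    Fin.sum_univ_two, Prod.ext_iff, mul_add]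
  ring
/-- Error-correction conditions for single-qubit Pauli errors on the
four-qubit erasure code: for every qubit `i` and every `P ∈ {X, Y, Z}`,
`⟨0_L| P_i |1_L⟩ = 0` and `⟨0_L| P_i |0_L⟩ = ⟨1_L| P_i |1_L⟩`. -/
theorem erasure_code_error_correction_conditions :
    ∀ i : Fin 4, ∀ P : Matrix (Fin 2) (Fin 2) ℂ,
      (P = pauliX ∨ P = pauliY ∨ P = pauliZ) →
      innerC zeroL (pauliOn P i *ᵥ oneL) = 0 ∧
      innerC zeroL (pauliOn P i *ᵥ zeroL) = innerC oneL (pauliOn P i *ᵥ oneL) := by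
  intro i P hP
  simp only [innerC_zeroL, innerC_oneL, mulVec_zeroL, mulVec_oneL]
  fin_cases i <;> rcases hP with h | h | h <;> subst h <;>
    simp [pauliOn, bits, Fin.prod_univ_four, pauliX, pauliY, pauliZ] <;> ring
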